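/- Every tight decomposition space X is split: all face maps preserve nondegenerate simplices. Moreover, for every r ≥ 1 no effective r-simplex has degenerate long edge (the intersection of →X_r → X_1 with s_0(X_0) ⊆ X_1 is empty), and every 1-dimensional face of an effective simplex is nondegenerate, so all faces of an effective simplex are effective. -/

import Mathlib

open CategoryTheory CategoryTheory.Limits Simplicial Opposite

/-- A map in the simplex category is *generic* if it preserves the endpoints. -/
def IsGeneric {a b : SimplexCategory} (g : a ⟶ b) : Prop :=
  g.toOrderHom 0 = 0 ∧ g.toOrderHom (Fin.last a.len) = Fin.last b.len

/-- A map in the simplex category is *free* if it is distance preserving. -/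
def IsFree {a b : SimplexCategory} (f : a ⟶ b) : Prop :=
  ∀ i : Fin (a.len + 1), (f.toOrderHom i : ℕ) = (f.toOrderHom 0 : ℕ) + (i : ℕ)

/-- A decomposition space is a simplicial set carrying every pushout in `Δ` of a
generic map `g` along a free map `f` to a pullback of sets. -/
def IsDecomposition (X : SSet) : Prop :=
  ∀ ⦃a b c d : SimplexCategory⦄ (g : a ⟶ b) (f : a ⟶ c) (h : b ⟶ d) (k : c ⟶ d),
    IsGeneric g → IsFree f → IsPushout g f h k →
    IsPullback (X.map h.op) (X.map k.op) (X.map g.op) (X.map f.op)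

/-- A simplicial set is *complete* if all degeneracy maps are injective. -/
def Complete (X : SSet) : Prop :=
  ∀ (n : ℕ) (i : Fin (n + 1)), Function.Injective (X.σ i : X _⦋n⦌ ⟶ X _⦋n + 1⦌)

/-- The free map `[1] → [n]` sending `0, 1` to `i, i+1`; it induces the map
taking the `i`-th principal edge (`0`-indexed) of an `n`-simplex. -/
def principalEdge (n : ℕ) (i : Fin n) : (⦋1⦌ : SimplexCategory) ⟶ ⦋n⦌ :=
  SimplexCategory.mkHom
    { toFun := fun j => ⟨i.1 + j.1, by have := i.2; have := j.2; omega⟩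
      monotone' := fun a b h => by
        simp only [Fin.mk_le_mk]
        exact Nat.add_le_add_left h i.1 }

/-- The unique generic map `[1] → [n]` (`0 ↦ 0`, `1 ↦ n`); it induces the map
taking the long edge of an `n`-simplex. -/
def longEdgeMap (n : ℕ) : (⦋1⦌ : SimplexCategory) ⟶ ⦋n⦌ :=
  SimplexCategory.mkHom
    { toFun := fun j => ⟨j.1 * n, by
        have h := j.2
        have : j.1 * n ≤ 1 * n := Nat.mul_le_mul_right n (by omega)
        omega⟩
      monotone' := fun a b h => by
        simp only [Fin.mk_le_mk]
        exact Nat.mul_le_mul_right n h }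

/-- The alphabet `{0, 1, a}`: `z` prescribes a degenerate principal edge, `o` an
unrestricted one, `a` a nondegenerate one. -/
inductive Letter where
  | z
  | o
  | a : Letter
  deriving DecidableEq

/-- The subset of `X₁` prescribed by a letter. -/
def edgeSet (X : SSet) : Letter → Set (X _⦋1⦌) := fun l => match l with
  | .z => Set.range (X.σ (0 : Fin 1))
  | .o => Set.univ
  | .a => (Set.range (X.σ (0 : Fin 1)))ᶜ

/-- `X_w`, the set of `n`-simplices whose principal edges have the types
prescribed by the word `w`. -/
def wordSet (X : SSet) {n : ℕ} (w : Fin n → Letter) : Set (X _⦋n⦌) :=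
  {σ | ∀ i : Fin n, X.map (principalEdge n i).op σ ∈ edgeSet X (w i)}

/-- A simplex is *effective* if all its principal edges are nondegenerate. -/
def Effective (X : SSet) {n : ℕ} (σ : X _⦋n⦌) : Prop :=
  ∀ i : Fin n, X.map (principalEdge n i).op σ ∉ Set.range (X.σ (0 : Fin 1))

/-- The constant word `aa⋯a`. -/
def allA (n : ℕ) : Fin n → Letter := fun _ => Letter.a

/-- Concatenation of words. -/
def concatW {m n : ℕ} (v : Fin m → Letter) (v' : Fin n → Letter) : Fin (m + n) → Letter :=
  fun i => if h : i.1 < m then v ⟨i.1, h⟩ else v' ⟨i.1 - m, by have := i.2; omega⟩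

/-- The word `v ℓ v'` obtained by splicing a letter `ℓ` between the words `v` and `v'`. -/
def splice {m n : ℕ} (v : Fin m → Letter) (l : Letter) (v' : Fin n → Letter) :
    Fin (m + n + 1) → Letter :=
  fun i => if h : i.1 < m then v ⟨i.1, h⟩
    else if h2 : i.1 = m then l
    else v' ⟨i.1 - (m + 1), by have := i.2; omega⟩

/-- A simplex (of positive dimension) is degenerate if it is in the image of some
degeneracy map. -/
def Degen (X : SSet) {n : ℕ} (σ : X _⦋n + 1⦌) : Prop :=
  ∃ i : Fin (n + 1), σ ∈ Set.range (X.σ i)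

/-- A simplicial map is *cULF* if its naturality squares on all generic maps are
pullbacks. -/
def IsCULF {Y X : SSet} (f : Y ⟶ X) : Prop :=
  ∀ ⦃a b : SimplexCategory⦄ (g : a ⟶ b), IsGeneric g →
    IsPullback (f.app (op b)) (Y.map g.op) (X.map g.op) (f.app (op a))

/-- A simplicial map is *conservative* if its naturality squares on all degeneracy
maps are pullbacks. -/
def Conservative {Y X : SSet} (f : Y ⟶ X) : Prop :=
  ∀ (n : ℕ) (i : Fin (n + 1)),
    IsPullback (f.app (op (SimplexCategory.mk n))) (Y.σ i) (X.σ i)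
      (f.app (op (SimplexCategory.mk (n + 1))))

/-- A simplicial set is *stiff* if it carries every pushout in `Δ` of a codegeneracy
map along a free map to a pullback of sets. -/
def Stiff (X : SSet) : Prop :=
  ∀ (k : ℕ) (i : Fin (k + 1)) ⦃c d : SimplexCategory⦄
    (f : SimplexCategory.mk (k + 1) ⟶ c) (h : SimplexCategory.mk k ⟶ d) (j : c ⟶ d),
    IsFree f → IsPushout (SimplexCategory.σ i) f h j →
    IsPullback (X.map h.op) (X.map j.op) (X.map (SimplexCategory.σ i).op) (X.map f.op)

/-- The map `[0] → [n]` picking out the vertex `i`. -/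
def vertexMap (n : ℕ) (i : Fin (n + 1)) : (⦋0⦌ : SimplexCategory) ⟶ ⦋n⦌ :=
  SimplexCategory.mkHom ⟨fun _ => i, fun _ _ _ => le_refl _⟩

/-- The unique map `[n] → [0]`; it induces the iterated degeneracy `X₀ → Xₙ`. -/
def toZero (n : ℕ) : (⦋n⦌ : SimplexCategory) ⟶ ⦋0⦌ :=
  SimplexCategory.mkHom ⟨fun _ => 0, fun _ _ _ => le_refl _⟩

/-- The generic map `[2] → [m+n]` sending `0,1,2` to `0,m,m+n`. -/
def midMap (m n : ℕ) : (⦋2⦌ : SimplexCategory) ⟶ ⦋m + n⦌ :=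
  SimplexCategory.mkHom
    { toFun := fun j => ⟨if j.1 = 0 then 0 else if j.1 = 1 then m else m + n, by
        split
        · omega
        · split <;> omega⟩
      monotone' := by
        intro a b hab
        have h : a.1 ≤ b.1 := hab
        have ha := a.2
        have hb := b.2
        simp only [Fin.mk_le_mk]
        split <;> split <;> (try split) <;> (try split) <;> omega }

/-- The free map `[m] → [m+n]` onto the initial segment. -/
def freeInitial (m n : ℕ) : (⦋m⦌ : SimplexCategory) ⟶ ⦋m + n⦌ :=
  SimplexCategory.mkHom ⟨fun i => ⟨i.1, by have := i.2; omega⟩, fun a b h => h⟩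

/-- The free map `[n] → [m+n]` onto the final segment. -/
def freeFinal (m n : ℕ) : (⦋n⦌ : SimplexCategory) ⟶ ⦋m + n⦌ :=
  SimplexCategory.mkHom ⟨fun i => ⟨m + i.1, by have := i.2; omega⟩,
    fun a b h => by
      simp only [Fin.mk_le_mk]
      exact Nat.add_le_add_left h m⟩

/-- The word `1aa⋯a` (`n` letters `a`). -/
def oneA (n : ℕ) : Fin (n + 1) → Letter := fun i => if i.1 = 0 then Letter.o else Letter.a

/-- The word `0aa⋯a` (`n` letters `a`). -/
def zeroA (n : ℕ) : Fin (n + 1) → Letter := fun i => if i.1 = 0 then Letter.z else Letter.a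

/-- The word `aa⋯a1` (`n` letters `a`). -/
def aOne (n : ℕ) : Fin (n + 1) → Letter := fun i => if i.1 = n then Letter.o else Letter.a

/-- The word `aa⋯a0` (`n` letters `a`). -/
def aZero (n : ℕ) : Fin (n + 1) → Letter := fun i => if i.1 = n then Letter.z else Letter.a

/-- The number of letters `0` in a word. -/
def zcount {n : ℕ} (w : Fin n → Letter) : ℕ :=
  (Finset.univ.filter fun i => w i = Letter.z).card

/-- The surjection `[n] → [n - zcount w]` collapsing, for each position `j` with
`w j = 0`, the vertex `j+1` onto the vertex `j`; the induced map
`X_{n - zcount w} → X_n` is the iterated degeneracy `s_{j_k} ⋯ s_{j_1}` where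
`j_1 < ⋯ < j_k` are the positions of the letters `0` of `w`. -/
def collapseMap {n : ℕ} (w : Fin n → Letter) :
    (⦋n⦌ : SimplexCategory) ⟶ ⦋n - zcount w⦌ :=
  SimplexCategory.mkHom
    { toFun := fun t =>
        ⟨(Finset.univ.filter fun i : Fin n => i.1 < t.1 ∧ ¬ (w i = Letter.z)).card, by
          have h2 := Finset.card_filter_add_card_filter_not
            (s := (Finset.univ : Finset (Fin n))) (p := fun i => w i = Letter.z)
          have h1 : (Finset.univ.filter fun i : Fin n => i.1 < t.1 ∧ ¬ (w i = Letter.z)).card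
              ≤ (Finset.univ.filter fun i : Fin n => ¬ (w i = Letter.z)).card :=
            Finset.card_le_card (fun x hx => by
              simp only [Finset.mem_filter] at hx ⊢
              exact ⟨hx.1, hx.2.2⟩)
          have h3 : zcount w = (Finset.univ.filter fun i : Fin n => w i = Letter.z).card := rfl
          simp only [Finset.card_univ, Fintype.card_fin] at h2
          omega⟩
      monotone' := by
        intro a b hab
        have h : a.1 ≤ b.1 := hab
        simp only [Fin.mk_le_mk]
        exact Finset.card_le_card (fun x hx => by
          simp only [Finset.mem_filter] at hx ⊢
          exact ⟨hx.1, lt_of_lt_of_le hx.2.1 h, hx.2.2⟩) }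

/-- An edge has finite length if there is a bound on the dimensions of the effective
simplices having it as long edge. -/
def FiniteLength (X : SSet) (a : X _⦋1⦌) : Prop :=
  ∃ N : ℕ, ∀ (n : ℕ) (σ : X _⦋n⦌), Effective X σ →
    X.map (longEdgeMap n).op σ = a → n ≤ N

/-- A *tight* decomposition space: a complete decomposition space in which every edge
has finite length. -/
def Tight (X : SSet) : Prop :=
  IsDecomposition X ∧ Function.Injective (X.σ (0 : Fin 1) : X _⦋0⦌ ⟶ X _⦋1⦌) ∧
    ∀ a : X _⦋1⦌, FiniteLength X a

/-- The length of an edge: the supremum of the dimensions of effective simplices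
having it as long edge. -/
noncomputable def edgeLength (X : SSet) (a : X _⦋1⦌) : ℕ :=
  sSup (setOf fun n : ℕ => ∃ σ : X _⦋n⦌, Effective X σ ∧ X.map (longEdgeMap n).op σ = a)

/-- A complete simplicial set is *split* if all face maps preserve nondegenerate
simplices. -/
def Split (X : SSet) : Prop :=
  Complete X ∧ ∀ (n : ℕ) (i : Fin (n + 3)) (σ : X _⦋n + 2⦌),
    ¬ Degen X σ → ¬ Degen X (X.δ i σ)

/-- The counit: the indicator function of the degenerate edges. -/
noncomputable def epsFun (X : SSet) : X _⦋1⦌ → ℚ := fun f =>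
  haveI := Classical.propDecidable (f ∈ Set.range (X.σ (0 : Fin 1)))
  if f ∈ Set.range (X.σ (0 : Fin 1)) then 1 else 0

/-- Convolution product on `ℚ`-valued functions on `X₁`. -/
noncomputable def convFun (X : SSet) (φ ψ : X _⦋1⦌ → ℚ) : X _⦋1⦌ → ℚ :=
  fun f => ∑ᶠ σ ∈ (fun τ => X.δ (1 : Fin 3) τ) ⁻¹' {f},
    φ (X.δ (2 : Fin 3) σ) * ψ (X.δ (0 : Fin 3) σ)

/-- The Möbius function `Φ_even - Φ_odd`. -/
noncomputable def muFun (X : SSet) : X _⦋1⦌ → ℚ :=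
  fun f => ∑ᶠ n : ℕ, (-1 : ℚ) ^ n *
    (Nat.card {σ : X.obj (op (SimplexCategory.mk n)) // Effective X σ ∧ X.map (longEdgeMap n).op σ = f} : ℚ)

/-- The category `Δ_inj`: objects those of the simplex category, morphisms the
injective monotone maps. -/
structure DeltaInj : Type where
  /-- the underlying object of the simplex category -/
  obj : SimplexCategory

instance : Category DeltaInj where
  Hom a b := {f : a.obj ⟶ b.obj // Function.Injective f.toOrderHom}
  id a := ⟨𝟙 a.obj, by
    rw [SimplexCategory.id_toOrderHom]
    exact fun x y h => h⟩
  comp f g := ⟨f.1 ≫ g.1, by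
    rw [SimplexCategory.comp_toOrderHom]
    exact fun x y h => f.2 (g.2 h)⟩
  id_comp f := by apply Subtype.ext; simp
  comp_id f := by apply Subtype.ext; simp
  assoc f g h := by apply Subtype.ext; simp

/-- The inclusion functor `Δ_inj ⊆ Δ`. -/
def DeltaInj.incl : DeltaInj ⥤ SimplexCategory where
  obj a := a.obj
  map f := f.1

/-- A *semi-decomposition space*: a semi-simplicial set carrying every pushout in
`Δ_inj` of a generic (inner) face map along a free (outer) face map to a pullback. -/
def IsSemiDecomposition (Z : DeltaInjᵒᵖ ⥤ Type) : Prop :=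
  ∀ ⦃a b c d : DeltaInj⦄ (g : a ⟶ b) (f : a ⟶ c) (h : b ⟶ d) (k : c ⟶ d),
    IsGeneric g.1 → IsFree f.1 → IsPushout g f h k →
    IsPullback (Z.map h.op) (Z.map k.op) (Z.map g.op) (Z.map f.op)

/-- A map of semi-simplicial sets is *ULF* if its naturality squares on all generic
face maps are pullbacks. -/
def IsULF {Z W : DeltaInjᵒᵖ ⥤ Type} (φ : Z ⟶ W) : Prop :=
  ∀ ⦃a b : DeltaInj⦄ (g : a ⟶ b), IsGeneric g.1 →
    IsPullback (φ.app (op b)) (Z.map g.op) (W.map g.op) (φ.app (op a))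

lemma conservative_id (X : SSet) : Conservative (𝟙 X) := by
  intro n i
  exact IsPullback.of_horiz_isIso ⟨by simp⟩

lemma conservative_comp {X Y Z : SSet} {f : X ⟶ Y} {g : Y ⟶ Z}
    (hf : Conservative f) (hg : Conservative g) : Conservative (f ≫ g) := by
  intro n i
  simpa using IsPullback.paste_horiz (hf n i) (hg n i)

lemma isCULF_id (X : SSet) : IsCULF (𝟙 X) := by
  intro a b gm hgm
  exact IsPullback.of_horiz_isIso ⟨by simp⟩

lemma isCULF_comp {X Y Z : SSet} {f : X ⟶ Y} {g : Y ⟶ Z}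
    (hf : IsCULF f) (hg : IsCULF g) : IsCULF (f ≫ g) := by
  intro a b gm hgm
  simpa using IsPullback.paste_horiz (hf gm hgm) (hg gm hgm)

lemma isULF_id (Z : DeltaInjᵒᵖ ⥤ Type) : IsULF (𝟙 Z) := by
  intro a b gm hgm
  exact IsPullback.of_horiz_isIso ⟨by simp⟩

lemma isULF_comp {X Y Z : DeltaInjᵒᵖ ⥤ Type} {f : X ⟶ Y} {g : Y ⟶ Z}
    (hf : IsULF f) (hg : IsULF g) : IsULF (f ≫ g) := by
  intro a b gm hgm
  simpa using IsPullback.paste_horiz (hf gm hgm) (hg gm hgm)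

/-- The category of split simplicial sets and conservative maps. -/
structure SplitSSet : Type 1 where
  /-- the underlying simplicial set -/
  X : SSet.{0}
  split : Split X

instance : Category SplitSSet where
  Hom A B := {f : A.X ⟶ B.X // Conservative f}
  id A := ⟨𝟙 A.X, conservative_id A.X⟩
  comp f g := ⟨f.1 ≫ g.1, conservative_comp f.2 g.2⟩
  id_comp f := by apply Subtype.ext; simp
  comp_id f := by apply Subtype.ext; simp
  assoc f g h := by apply Subtype.ext; simp

/-- The forgetful functor from split simplicial sets to simplicial sets. -/
def SplitSSet.forget : SplitSSet ⥤ SSet where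
  obj A := A.X
  map f := f.1

/-- The category of split decomposition spaces and cULF maps. -/
structure SplitDecomp : Type 1 where
  /-- the underlying simplicial set -/
  X : SSet.{0}
  split : Split X
  decomp : IsDecomposition X

instance : Category SplitDecomp where
  Hom A B := {f : A.X ⟶ B.X // IsCULF f}
  id A := ⟨𝟙 A.X, isCULF_id A.X⟩
  comp f g := ⟨f.1 ≫ g.1, isCULF_comp f.2 g.2⟩
  id_comp f := by apply Subtype.ext; simp
  comp_id f := by apply Subtype.ext; simp
  assoc f g h := by apply Subtype.ext; simp

/-- The forgetful functor from split decomposition spaces to simplicial sets. -/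
def SplitDecomp.forget : SplitDecomp ⥤ SSet where
  obj A := A.X
  map f := f.1

/-- The category of semi-decomposition spaces and ULF maps. -/
structure SemiDecomp : Type 1 where
  /-- the underlying semi-simplicial set -/
  Z : DeltaInjᵒᵖ ⥤ Type
  semidecomp : IsSemiDecomposition Z

instance : Category SemiDecomp where
  Hom A B := {φ : A.Z ⟶ B.Z // IsULF φ}
  id A := ⟨𝟙 A.Z, isULF_id A.Z⟩
  comp f g := ⟨f.1 ≫ g.1, isULF_comp f.2 g.2⟩
  id_comp f := by apply Subtype.ext; simp
  comp_id f := by apply Subtype.ext; simp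
  assoc f g h := by apply Subtype.ext; simp

/-- The forgetful functor from semi-decomposition spaces to semi-simplicial sets. -/
def SemiDecomp.forget : SemiDecomp ⥤ (DeltaInjᵒᵖ ⥤ Type) where
  obj A := A.Z
  map f := f.1

section Aux

lemma homext' {a b : SimplexCategory} (f g : a ⟶ b)
    (h : ∀ t : Fin (a.len+1), ((f.toOrderHom t : Fin (b.len+1)) : ℕ) = ((g.toOrderHom t : Fin (b.len+1)) : ℕ)) : f = g := by
  apply SimplexCategory.Hom.ext
  ext t
  exact h t

lemma mapc' (X : SSet) {a b c : SimplexCategory} (e : a ⟶ b) (h : b ⟶ c) (σ : X.obj (op c)) :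
    X.map (e ≫ h).op σ = X.map e.op (X.map h.op σ) := by
  rw [op_comp, X.map_comp]; rfl

lemma valc {a b c : SimplexCategory} (f : a ⟶ b) (g : b ⟶ c) (t : Fin (a.len+1)) :
    ((f ≫ g).toOrderHom t) = g.toOrderHom (f.toOrderHom t) := rfl

lemma sigma_val {n : ℕ} (i : Fin (n+1)) (t : Fin (n+2)) :
    (((SimplexCategory.σ i).toOrderHom t : Fin (n+1)) : ℕ) = if i.1 < t.1 then t.1 - 1 else t.1 := by
  simp [SimplexCategory.σ, Fin.predAbove]
  rcases Nat.lt_or_ge i.1 t.1 with h | h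
  · rw [dif_pos (by simpa [Fin.lt_def] using h), if_pos h]; rfl
  · rw [dif_neg (by simp [Fin.lt_def]; omega), if_neg (by omega)]; rfl

lemma delta_val {n : ℕ} (i : Fin (n+2)) (t : Fin (n+1)) :
    (((SimplexCategory.δ i).toOrderHom t : Fin (n+2)) : ℕ) = if t.1 < i.1 then t.1 else t.1 + 1 := by
  simp [SimplexCategory.δ, Fin.succAbove]
  rcases Nat.lt_or_ge t.1 i.1 with h | h
  · rw [if_pos (by simpa [Fin.lt_def] using h), if_pos h]; rfl
  · rw [if_neg (by simp [Fin.lt_def]; omega), if_neg (by omega)]; rfl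

lemma ssig (X : SSet) {n : ℕ} (i : Fin (n+1)) :
    (X.σ i : X _⦋n⦌ ⟶ X _⦋n+1⦌) = X.map (SimplexCategory.σ i).op := rfl

lemma sdel (X : SSet) {n : ℕ} (i : Fin (n+2)) :
    (X.δ i : X _⦋n+1⦌ ⟶ X _⦋n⦌) = X.map (SimplexCategory.δ i).op := rfl

lemma pb_ex {P A B C : Type u} (fst : P ⟶ A) (snd : P ⟶ B) (f : A ⟶ C) (g : B ⟶ C)
    (hP : IsPullback fst snd f g) (a : A) (b : B) (w : f a = g b) :
    ∃ p : P, fst p = a ∧ snd p = b := by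
  have hw : TypeCat.ofHom (fun _ : PUnit => a) ≫ f = TypeCat.ofHom (fun _ : PUnit => b) ≫ g := by ext; exact w
  refine ⟨hP.lift _ _ hw PUnit.unit, ?_, ?_⟩
  · exact ConcreteCategory.congr_hom (hP.lift_fst _ _ hw) _
  · exact ConcreteCategory.congr_hom (hP.lift_snd _ _ hw) _

lemma pb_inj {P A B C : Type u} (fst : P ⟶ A) (snd : P ⟶ B) (f : A ⟶ C) (g : B ⟶ C)
    (hP : IsPullback fst snd f g) (hf : Function.Injective f) : Function.Injective snd := by
  intro p q h
  have h1 : fst p = fst q := by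
    apply hf
    have hp := ConcreteCategory.congr_hom hP.w p
    have hq := ConcreteCategory.congr_hom hP.w q
    simp only [types_comp_apply] at hp hq
    rw [hp, hq, h]
  have := hP.hom_ext (k := TypeCat.ofHom (fun _ : PUnit => p)) (l := TypeCat.ofHom (fun _ : PUnit => q))
    (by ext; exact h1) (by ext; exact h)
  exact ConcreteCategory.congr_hom this PUnit.unit

lemma pe_val {n : ℕ} (i : Fin n) (t : Fin 2) :
    (((principalEdge n i).toOrderHom t : Fin (n+1)) : ℕ) = i.1 + t.1 := rfl

lemma long_val (n : ℕ) (t : Fin 2) :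
    (((longEdgeMap n).toOrderHom t : Fin (n+1)) : ℕ) = t.1 * n := rfl

lemma generic_long (n : ℕ) : IsGeneric (longEdgeMap n) := by
  constructor
  · apply Fin.ext
    show (0 : Fin 2).1 * n = (0 : Fin (n+1)).1
    simp
  · apply Fin.ext
    show (Fin.last 1).1 * n = n
    simp

lemma free_pe (n : ℕ) (i : Fin n) : IsFree (principalEdge n i) := by
  intro t
  show i.1 + t.1 = (i.1 + (0:Fin 2).1) + t.1
  simp


lemma fin1_eq (x y : Fin ((⦋0⦌ : SimplexCategory).len + 1)) : x = y := by
  apply Fin.ext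
  have hx : x.1 < 1 := x.2
  have hy : y.1 < 1 := y.2
  omega

lemma cocone_key (n : ℕ) (i : Fin (n+1))
    (s : PushoutCocone (SimplexCategory.σ (0 : Fin 1)) (principalEdge (n+1) i))
    (u : Fin ((⦋0⦌ : SimplexCategory).len + 1)) (v : Fin (n+2))
    (hv : v.1 = i.1 ∨ v.1 = i.1 + 1) :
    (s.inl.toOrderHom u : ℕ) = (s.inr.toOrderHom v : ℕ) := by
  have hvb := v.2
  have hi := i.2
  have hc := congrArg (fun q => ((q.toOrderHom (⟨v.1 - i.1, by omega⟩ : Fin 2) : Fin (s.pt.len+1)) : ℕ)) s.condition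
  simp only [valc] at hc
  rw [fin1_eq ((SimplexCategory.σ (0:Fin 1)).toOrderHom _) u] at hc
  have h3 : (principalEdge (n+1) i).toOrderHom (⟨v.1 - i.1, by omega⟩ : Fin 2) = v := by
    apply Fin.ext
    show i.1 + (v.1 - i.1) = v.1
    omega
  rw [h3] at hc
  exact hc

/-- The auxiliary "section-shift" function for the degeneracy pushout. -/
def descFun (n : ℕ) (i : Fin (n+1)) (t : Fin (n+1)) : Fin (n+2) :=
  ⟨if t.1 ≤ i.1 then t.1 else t.1 + 1, by have := t.2; split <;> omega⟩

/-- The pushout of `σ₀ : [1] → [0]` along the `i`-th principal edge. -/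
lemma pushout1 (n : ℕ) (i : Fin (n+1)) :
    IsPushout (SimplexCategory.σ (0 : Fin 1)) (principalEdge (n+1) i)
      (vertexMap n i) (SimplexCategory.σ i) := by
  have comm : SimplexCategory.σ (0 : Fin 1) ≫ vertexMap n i
      = principalEdge (n+1) i ≫ SimplexCategory.σ i := by
    apply homext'
    intro t
    rw [valc, valc]
    have h0 : (((vertexMap n i).toOrderHom ((SimplexCategory.σ (0:Fin 1)).toOrderHom t)) : ℕ) = i.1 := rfl
    have h1 := sigma_val i ((principalEdge (n+1) i).toOrderHom t)
    rw [pe_val] at h1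
    rw [h0, h1]
    have h2 : t.1 < 2 := t.2
    split <;> omega
  refine IsPushout.of_isColimit (PushoutCocone.IsColimit.mk comm (fun s =>
    SimplexCategory.mkHom ⟨fun t => s.inr.toOrderHom (descFun n i t), fun a b hab => by
      apply s.inr.toOrderHom.monotone
      have hab' : a.1 ≤ b.1 := hab
      show (if a.1 ≤ i.1 then a.1 else a.1+1) ≤ (if b.1 ≤ i.1 then b.1 else b.1+1)
      split <;> split <;> omega⟩) ?_ ?_ ?_)
  case _ => -- fac_left
    intro s
    have key := cocone_key n i s
    apply homext'
    intro t
    rw [valc]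
    show (s.inr.toOrderHom (descFun n i ((vertexMap n i).toOrderHom t)) : ℕ) = _
    have h4 : descFun n i ((vertexMap n i).toOrderHom t) = ⟨i.1, by omega⟩ := by
      apply Fin.ext
      show (if i.1 ≤ i.1 then i.1 else i.1 + 1) = i.1
      simp
    rw [h4]
    exact (key t ⟨i.1, by omega⟩ (Or.inl rfl)).symm
  case _ => -- fac_right
    intro s
    have key := cocone_key n i s
    apply homext'
    intro t
    rw [valc]
    show (s.inr.toOrderHom (descFun n i ((SimplexCategory.σ i).toOrderHom t)) : ℕ) = _
    have hsv := sigma_val i t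
    have ht2 := t.2
    rcases eq_or_ne t.1 (i.1+1) with h | h
    · have h4 : descFun n i ((SimplexCategory.σ i).toOrderHom t) = ⟨i.1, by omega⟩ := by
        apply Fin.ext
        show (if (((SimplexCategory.σ i).toOrderHom t : Fin (n+1)) : ℕ) ≤ i.1
          then (((SimplexCategory.σ i).toOrderHom t : Fin (n+1)) : ℕ)
          else (((SimplexCategory.σ i).toOrderHom t : Fin (n+1)) : ℕ) + 1) = i.1
        rw [hsv]
        split <;> split <;> omega
      rw [h4]
      rw [← key 0 ⟨i.1, by omega⟩ (Or.inl rfl), key 0 t (Or.inr (by omega))]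
    · have h4 : descFun n i ((SimplexCategory.σ i).toOrderHom t) = t := by
        apply Fin.ext
        show (if (((SimplexCategory.σ i).toOrderHom t : Fin (n+1)) : ℕ) ≤ i.1
          then (((SimplexCategory.σ i).toOrderHom t : Fin (n+1)) : ℕ)
          else (((SimplexCategory.σ i).toOrderHom t : Fin (n+1)) : ℕ) + 1) = t.1
        rw [hsv]
        split <;> split <;> omega
      rw [h4]
  case _ => -- uniq
    intro s m hm1 hm2
    apply homext'
    intro t
    have hm2' := congrArg (fun q => ((q.toOrderHom (descFun n i t) : Fin (s.pt.len+1)) : ℕ)) hm2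
    simp only [valc] at hm2'
    have h5 : (SimplexCategory.σ i).toOrderHom (descFun n i t) = t := by
      apply Fin.ext
      rw [sigma_val]
      show (if i.1 < (if t.1 ≤ i.1 then t.1 else t.1 + 1) then (if t.1 ≤ i.1 then t.1 else t.1+1) - 1
        else (if t.1 ≤ i.1 then t.1 else t.1+1)) = t.1
      split <;> split <;> omega
    rw [h5] at hm2'
    rw [hm2']
    rfl

/-- The generic map `[r+1] → [m+r]` sending `0 ↦ 0` and `t ↦ m + t - 1` for `t ≥ 1`. -/
def glueK (m r : ℕ) : (⦋r+1⦌ : SimplexCategory) ⟶ ⦋m+r⦌ :=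
  SimplexCategory.mkHom
    { toFun := fun t => ⟨if t.1 = 0 then 0 else m + t.1 - 1, by have := t.2; split <;> omega⟩
      monotone' := fun a b hab => by
        have hab' : a.1 ≤ b.1 := hab
        simp only [Fin.mk_le_mk]
        split <;> split <;> omega }

lemma glueK_val (m r : ℕ) (t : Fin (r+2)) :
    (((glueK m r).toOrderHom t : Fin (m+r+1)) : ℕ) = if t.1 = 0 then 0 else m + t.1 - 1 := rfl

lemma freeInitial_val (m r : ℕ) (t : Fin (m+1)) :
    (((freeInitial m r).toOrderHom t : Fin (m+r+1)) : ℕ) = t.1 := rfl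

lemma cocone_key2 (m r : ℕ)
    (s : PushoutCocone (longEdgeMap m) (principalEdge (r+1) ⟨0, Nat.succ_pos r⟩))
    (u : Fin (m+1)) (v : Fin (r+2))
    (hv : (u.1 = 0 ∧ v.1 = 0) ∨ (u.1 = m ∧ v.1 = 1)) :
    (s.inl.toOrderHom u : ℕ) = (s.inr.toOrderHom v : ℕ) := by
  have hvb := v.2
  have hub := u.2
  have hc := congrArg (fun q => ((q.toOrderHom (⟨v.1, by omega⟩ : Fin 2) : Fin (s.pt.len+1)) : ℕ)) s.condition
  simp only [valc] at hc
  have h1 : (longEdgeMap m).toOrderHom (⟨v.1, by omega⟩ : Fin 2) = u := by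
    apply Fin.ext
    show v.1 * m = u.1
    rcases hv with ⟨hu, hv0⟩ | ⟨hu, hv0⟩ <;> rw [hv0] <;> omega
  have h2 : (principalEdge (r+1) ⟨0, Nat.succ_pos r⟩).toOrderHom (⟨v.1, by omega⟩ : Fin 2) = v := by
    apply Fin.ext
    show 0 + v.1 = v.1
    omega
  rw [h1, h2] at hc
  exact hc

/-- The pushout gluing an `m`-simplex and an `r`-simplex along the long edge of the
former and the first principal edge of the latter. -/
lemma pushout2 (m r : ℕ) (hm : 0 < m) :
    IsPushout (longEdgeMap m) (principalEdge (r+1) ⟨0, Nat.succ_pos r⟩)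
      (freeInitial m r) (glueK m r) := by
  have comm : longEdgeMap m ≫ freeInitial m r
      = principalEdge (r+1) ⟨0, Nat.succ_pos r⟩ ≫ glueK m r := by
    apply homext'
    intro t
    rw [valc, valc]
    have h2 : t.1 < 2 := t.2
    have h0 : (((freeInitial m r).toOrderHom ((longEdgeMap m).toOrderHom t)) : ℕ) = t.1 * m := rfl
    have h1 : (((glueK m r).toOrderHom ((principalEdge (r+1) ⟨0, Nat.succ_pos r⟩).toOrderHom t)) : ℕ)
        = if (0 + t.1 : ℕ) = 0 then 0 else m + (0 + t.1) - 1 := rfl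
    rw [h0, h1]
    have h3 : t.1 = 0 ∨ t.1 = 1 := by omega
    rcases h3 with h3 | h3 <;> rw [h3] <;> simp
  refine IsPushout.of_isColimit (PushoutCocone.IsColimit.mk comm (fun s =>
    SimplexCategory.mkHom ⟨fun t =>
      if h : t.1 < m then s.inl.toOrderHom ⟨t.1, by show t.1 < m + 1; omega⟩
      else s.inr.toOrderHom ⟨t.1 - m + 1, by show t.1 - m + 1 < r + 2; have ht : t.1 < m + r + 1 := t.2; omega⟩,
      fun a b hab => by
      beta_reduce
      have hab' : a.1 ≤ b.1 := hab
      have ha : a.1 < m + r + 1 := a.2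
      have hb : b.1 < m + r + 1 := b.2
      by_cases h1 : a.1 < m <;> by_cases h2 : b.1 < m
      · rw [dif_pos h1, dif_pos h2]
        exact s.inl.toOrderHom.monotone (Fin.mk_le_mk.mpr hab')
      · rw [dif_pos h1, dif_neg h2]
        rw [Fin.le_def]
        calc (s.inl.toOrderHom ⟨a.1, by show a.1 < m + 1; omega⟩ : ℕ)
            ≤ (s.inl.toOrderHom ⟨m, by show m < m + 1; omega⟩ : ℕ) :=
              Fin.le_def.mp (s.inl.toOrderHom.monotone (Fin.mk_le_mk.mpr (by omega)))
          _ = (s.inr.toOrderHom ⟨1, by show (1:ℕ) < r + 2; omega⟩ : ℕ) :=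
              cocone_key2 m r s _ _ (Or.inr ⟨rfl, rfl⟩)
          _ ≤ (s.inr.toOrderHom ⟨b.1 - m + 1, by show b.1 - m + 1 < r + 2; omega⟩ : ℕ) :=
              Fin.le_def.mp (s.inr.toOrderHom.monotone (Fin.mk_le_mk.mpr (by omega)))
      · omega
      · rw [dif_neg h1, dif_neg h2]
        exact s.inr.toOrderHom.monotone (Fin.mk_le_mk.mpr (by omega))⟩) ?_ ?_ ?_)
  · -- fac_left
    intro s
    apply homext'
    intro t
    rw [valc]
    have ht : t.1 < m + 1 := t.2
    simp only [SimplexCategory.mkHom, SimplexCategory.Hom.toOrderHom_mk, OrderHom.coe_mk]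
    have hf : (((freeInitial m r).toOrderHom t : Fin (m+r+1)) : ℕ) = t.1 := rfl
    rcases Nat.lt_or_ge (((freeInitial m r).toOrderHom t : Fin (m+r+1)) : ℕ) m with h | h
    · rw [dif_pos h]
      exact congrArg (fun z => ((s.inl.toOrderHom z : Fin (s.pt.len+1)) : ℕ)) (Fin.ext hf)
    · rw [dif_neg (by omega)]
      refine (cocone_key2 m r s t
        ⟨(((freeInitial m r).toOrderHom t : Fin (m+r+1)) : ℕ) - m + 1, by omega⟩ (Or.inr ⟨by omega,
          by show (((freeInitial m r).toOrderHom t : Fin (m+r+1)) : ℕ) - m + 1 = 1; omega⟩)).symm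
  · -- fac_right
    intro s
    apply homext'
    intro t
    rw [valc]
    have ht : t.1 < r + 2 := t.2
    simp only [SimplexCategory.mkHom, SimplexCategory.Hom.toOrderHom_mk, OrderHom.coe_mk]
    have hg : (((glueK m r).toOrderHom t : Fin (m+r+1)) : ℕ) = if t.1 = 0 then 0 else m + t.1 - 1 := rfl
    rcases Nat.lt_or_ge (((glueK m r).toOrderHom t : Fin (m+r+1)) : ℕ) m with h | h
    · rw [dif_pos h]
      have ht0 : t.1 = 0 := by
        by_contra hne
        rw [hg, if_neg hne] at h
        omega
      refine cocone_key2 m r s ⟨(((glueK m r).toOrderHom t : Fin (m+r+1)) : ℕ), by omega⟩ t (Or.inl ⟨?_, ht0⟩)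
      show (((glueK m r).toOrderHom t : Fin (m+r+1)) : ℕ) = 0
      rw [hg, if_pos ht0]
    · rw [dif_neg (by omega)]
      refine congrArg (fun z => ((s.inr.toOrderHom z : Fin (s.pt.len+1)) : ℕ)) (Fin.ext ?_)
      show (((glueK m r).toOrderHom t : Fin (m+r+1)) : ℕ) - m + 1 = t.1
      rw [hg] at h ⊢
      split at h
      · omega
      · split
        · omega
        · omega
  · -- uniq
    intro s w hw1 hw2
    apply homext'
    intro t
    have ht : t.1 < m + r + 1 := t.2
    simp only [SimplexCategory.mkHom, SimplexCategory.Hom.toOrderHom_mk, OrderHom.coe_mk]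
    rcases Nat.lt_or_ge t.1 m with h | h
    · rw [dif_pos h]
      have hk := congrArg (fun q => ((q.toOrderHom (⟨t.1, by show t.1 < m + 1; omega⟩ : Fin (m+1)) : Fin (s.pt.len+1)) : ℕ)) hw1
      simp only [valc] at hk
      have harg : (freeInitial m r).toOrderHom (⟨t.1, by show t.1 < m + 1; omega⟩ : Fin (m+1)) = t := by
        apply Fin.ext
        show t.1 = t.1
        rfl
      rw [harg] at hk
      exact hk
    · rw [dif_neg (by omega)]
      have hk := congrArg (fun q => ((q.toOrderHom (⟨t.1 - m + 1, by show t.1 - m + 1 < r + 2; omega⟩ : Fin (r+2)) : Fin (s.pt.len+1)) : ℕ)) hw2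
      simp only [valc] at hk
      have harg : (glueK m r).toOrderHom (⟨t.1 - m + 1, by show t.1 - m + 1 < r + 2; omega⟩ : Fin (r+2)) = t := by
        apply Fin.ext
        show (if t.1 - m + 1 = 0 then 0 else m + (t.1 - m + 1) - 1) = t.1
        rw [if_neg (by omega)]
        omega
      rw [harg] at hk
      exact hk

lemma generic_sigma0 : IsGeneric (SimplexCategory.σ (0 : Fin 1)) := ⟨fin1_eq _ _, fin1_eq _ _⟩

/-- The pullback of the degeneracy square in a decomposition space. -/
lemma pb1 (X : SSet) (hD : IsDecomposition X) (n : ℕ) (i : Fin (n+1)) :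
    IsPullback (X.map (vertexMap n i).op) (X.map (SimplexCategory.σ i).op)
      (X.map (SimplexCategory.σ (0 : Fin 1)).op) (X.map (principalEdge (n+1) i).op) :=
  hD _ _ _ _ generic_sigma0 (free_pe _ _) (pushout1 n i)

/-- An `(n+1)`-simplex is in the image of `σᵢ` iff its `i`-th principal edge is degenerate. -/
lemma degen_iff (X : SSet) (hD : IsDecomposition X) {n : ℕ} (i : Fin (n+1)) (τ : X _⦋n+1⦌) :
    τ ∈ Set.range (X.σ i) ↔
      X.map (principalEdge (n+1) i).op τ ∈ Set.range (X.σ (0 : Fin 1)) := by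
  constructor
  · rintro ⟨y, rfl⟩
    refine ⟨X.map (vertexMap n i).op y, ?_⟩
    show X.map (SimplexCategory.σ (0:Fin 1)).op (X.map (vertexMap n i).op y)
      = X.map (principalEdge (n+1) i).op (X.map (SimplexCategory.σ i).op y)
    rw [← mapc', ← mapc', (pushout1 n i).w]
  · rintro ⟨x, hx⟩
    obtain ⟨p, _, hp2⟩ := pb_ex (X.map (vertexMap n i).op) (X.map (SimplexCategory.σ i).op)
      (X.map (SimplexCategory.σ (0 : Fin 1)).op) (X.map (principalEdge (n+1) i).op)
      (pb1 X hD n i) x τ hx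
    exact ⟨p, hp2⟩

lemma complete_of (X : SSet) (hD : IsDecomposition X)
    (h0 : Function.Injective (X.σ (0 : Fin 1) : X _⦋0⦌ ⟶ X _⦋1⦌)) : Complete X := by
  intro n i
  have key := pb_inj (X.map (vertexMap n i).op) (X.map (SimplexCategory.σ i).op)
    (X.map (SimplexCategory.σ (0 : Fin 1)).op) (X.map (principalEdge (n+1) i).op)
    (pb1 X hD n i) (fun u v hv => h0 hv)
  exact fun a b hh => key hh

lemma degen_iff_eff (X : SSet) (hD : IsDecomposition X) {n : ℕ} (τ : X _⦋n+1⦌) :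
    Degen X τ ↔ ¬ Effective X τ := by
  constructor
  · rintro ⟨i, hi⟩ h
    exact h i ((degen_iff X hD i τ).mp hi)
  · intro h
    simp only [Effective, not_forall, not_not] at h
    obtain ⟨i, hi⟩ := h
    exact ⟨i, (degen_iff X hD i τ).mpr hi⟩

lemma pe_val' {n : ℕ} (a : ℕ) (h : a < n) (t : Fin 2) :
    (((principalEdge n ⟨a, h⟩).toOrderHom t : Fin (n+1)) : ℕ) = a + t.1 := rfl

lemma comm2a (r : ℕ) : principalEdge (r+1) ⟨0, Nat.succ_pos r⟩ ≫ SimplexCategory.σ (0 : Fin (r+1))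
    = SimplexCategory.σ (0 : Fin 1) ≫ vertexMap r 0 := by
  apply homext'
  intro t
  rw [valc, valc]
  have h2 : t.1 < 2 := t.2
  have h1 := sigma_val (0 : Fin (r+1)) ((principalEdge (r+1) ⟨0, Nat.succ_pos r⟩).toOrderHom t)
  rw [pe_val'] at h1
  simp only [Fin.val_zero, Nat.zero_add] at h1
  have h0 : (((vertexMap r 0).toOrderHom ((SimplexCategory.σ (0:Fin 1)).toOrderHom t) : Fin (r+1)) : ℕ)
      = ((0 : Fin (r+1)) : ℕ) := rfl
  rw [h1, h0]
  simp only [Fin.val_zero]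
  split <;> omega

lemma comm2b (r : ℕ) : vertexMap 1 0 ≫ longEdgeMap r = vertexMap r 0 := by
  apply homext'
  intro t
  rw [valc]
  have h0 : (((longEdgeMap r).toOrderHom ((vertexMap 1 0).toOrderHom t) : Fin (r+1)) : ℕ)
      = ((0 : Fin 2) : ℕ) * r := rfl
  have h1 : (((vertexMap r 0).toOrderHom t : Fin (r+1)) : ℕ) = ((0 : Fin (r+1)) : ℕ) := rfl
  rw [h0, h1]
  simp

lemma comm2c : vertexMap 1 0 ≫ SimplexCategory.σ (0 : Fin 1) = 𝟙 (⦋0⦌ : SimplexCategory) := by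
  apply homext'
  intro t
  exact congrArg Fin.val (fin1_eq _ _)

lemma comm3 (m r : ℕ) (i : Fin (m+r)) (h : i.1 < m) :
    principalEdge (m+r) i = principalEdge m ⟨i.1, h⟩ ≫ freeInitial m r := by
  apply homext'
  intro t
  rw [valc]
  rfl

lemma comm4 (m r : ℕ) (i : Fin (m+r)) (h : m ≤ i.1) :
    principalEdge (m+r) i
      = principalEdge (r+1) ⟨i.1 - m + 1, by have := i.2; omega⟩ ≫ glueK m r := by
  apply homext'
  intro t
  rw [valc]
  have h0 : (((principalEdge (m+r) i).toOrderHom t : Fin (m+r+1)) : ℕ) = i.1 + t.1 := rfl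
  have h1 : (((glueK m r).toOrderHom
      ((principalEdge (r+1) ⟨i.1 - m + 1, by have := i.2; omega⟩).toOrderHom t) : Fin (m+r+1)) : ℕ)
      = if (i.1 - m + 1) + t.1 = 0 then 0 else m + ((i.1 - m + 1) + t.1) - 1 := rfl
  rw [h0, h1, if_neg (by omega)]
  omega

lemma comm5 (r : ℕ) (j : ℕ) (hj : j < r) :
    principalEdge (r+1) ⟨j+1, by omega⟩ ≫ SimplexCategory.σ (0 : Fin (r+1))
      = principalEdge r ⟨j, hj⟩ := by
  apply homext'
  intro t
  rw [valc]
  have h2 : t.1 < 2 := t.2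
  have h1 := sigma_val (0 : Fin (r+1)) ((principalEdge (r+1) ⟨j+1, by omega⟩).toOrderHom t)
  rw [pe_val'] at h1
  simp only [Fin.val_zero] at h1
  have h0 : (((principalEdge r ⟨j, hj⟩).toOrderHom t : Fin (r+1)) : ℕ) = j + t.1 := rfl
  rw [h0, h1.trans (if_pos (by omega))]
  omega

lemma comm6 (m r : ℕ) : longEdgeMap (m+r) = longEdgeMap (r+1) ≫ glueK m r := by
  apply homext'
  intro t
  rw [valc]
  have h2 : t.1 < 2 := t.2
  have h0 : (((longEdgeMap (m+r)).toOrderHom t : Fin (m+r+1)) : ℕ) = t.1 * (m+r) := rfl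
  have h1 : (((glueK m r).toOrderHom ((longEdgeMap (r+1)).toOrderHom t) : Fin (m+r+1)) : ℕ)
      = if t.1 * (r+1) = 0 then 0 else m + t.1 * (r+1) - 1 := rfl
  rw [h0, h1]
  have h3 : t.1 = 0 ∨ t.1 = 1 := by omega
  rcases h3 with h3 | h3 <;> rw [h3] <;> simp

lemma comm7 (r : ℕ) :
    longEdgeMap (r+1) ≫ SimplexCategory.σ (0 : Fin (r+1)) = longEdgeMap r := by
  apply homext'
  intro t
  rw [valc]
  have h2 : t.1 < 2 := t.2
  have h1 := sigma_val (0 : Fin (r+1)) ((longEdgeMap (r+1)).toOrderHom t)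
  rw [long_val] at h1
  simp only [Fin.val_zero] at h1
  have h0 : (((longEdgeMap r).toOrderHom t : Fin (r+1)) : ℕ) = t.1 * r := rfl
  rw [h1, h0]
  have h3 : t.1 = 0 ∨ t.1 = 1 := by omega
  rcases h3 with h3 | h3 <;> rw [h3] <;> simp

/-- Gluing an effective `m`-simplex and an effective `r`-simplex, both with the
degenerate long edge `s₀ x`, into an effective `(m+r)`-simplex with the same long edge. -/
lemma grow (X : SSet) (hD : IsDecomposition X) {r : ℕ} {m : ℕ} (hm : 0 < m)
    (σ : X _⦋r⦌) (hσ : Effective X σ) (τ : X _⦋m⦌) (hτ : Effective X τ) (x : X _⦋0⦌)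
    (hs : X.map (longEdgeMap r).op σ = X.σ (0 : Fin 1) x)
    (ht : X.map (longEdgeMap m).op τ = X.σ (0 : Fin 1) x) :
    ∃ ρ : X _⦋m+r⦌, Effective X ρ ∧
      X.map (longEdgeMap (m+r)).op ρ = X.σ (0 : Fin 1) x := by
  have pb := hD (longEdgeMap m) (principalEdge (r+1) ⟨0, Nat.succ_pos r⟩)
    (freeInitial m r) (glueK m r) (generic_long m) (free_pe _ _) (pushout2 m r hm)
  -- the vertex of σ
  have hv : X.map (vertexMap r 0).op σ = x := by
    rw [← comm2b, mapc', hs]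
    show X.map (vertexMap 1 0).op (X.map (SimplexCategory.σ (0:Fin 1)).op x) = x
    rw [← mapc', comm2c]
    show X.map (𝟙 (⦋0⦌ : SimplexCategory)).op x = x
    rw [op_id, X.map_id]
    rfl
  -- the matching condition
  have hmatch : X.map (longEdgeMap m).op τ
      = X.map (principalEdge (r+1) ⟨0, Nat.succ_pos r⟩).op
          (X.map (SimplexCategory.σ (0 : Fin (r+1))).op σ) := by
    rw [← mapc', comm2a, mapc', hv, ht]
    rfl
  obtain ⟨ρ, hρ1, hρ2⟩ := pb_ex (X.map (freeInitial m r).op) (X.map (glueK m r).op)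
    (X.map (longEdgeMap m).op) (X.map (principalEdge (r+1) ⟨0, Nat.succ_pos r⟩).op)
    pb τ (X.map (SimplexCategory.σ (0 : Fin (r+1))).op σ) hmatch
  refine ⟨ρ, ?_, ?_⟩
  · intro i
    rcases Nat.lt_or_ge i.1 m with h | h
    · rw [comm3 m r i h, mapc', hρ1]
      exact hτ ⟨i.1, h⟩
    · have hi2 : i.1 < m + r := i.2
      rw [comm4 m r i h, mapc', hρ2, ← mapc', comm5 r (i.1 - m) (by omega)]
      exact hσ ⟨i.1 - m, by omega⟩
  · rw [comm6 m r, mapc', hρ2, ← mapc', comm7, hs]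

lemma grow_all (X : SSet) (hX : Tight X) {r : ℕ} (hr : 0 < r)
    (σ : X _⦋r⦌) (hσ : Effective X σ) (x : X _⦋0⦌)
    (hs : X.map (longEdgeMap r).op σ = X.σ (0 : Fin 1) x) :
    ∀ k : ℕ, ∃ m : ℕ, k ≤ m ∧ 0 < m ∧ ∃ τ : X _⦋m⦌, Effective X τ ∧
      X.map (longEdgeMap m).op τ = X.σ (0 : Fin 1) x := by
  intro k
  induction k with
  | zero => exact ⟨r, by omega, hr, σ, hσ, hs⟩
  | succ k ih =>
    obtain ⟨m, hk, hm, τ, hτ, htl⟩ := ih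
    obtain ⟨ρ, hρ, hρl⟩ := grow X hX.1 hm σ hσ τ hτ x hs htl
    exact ⟨m + r, by omega, by omega, ρ, hρ, hρl⟩

/-- In a tight decomposition space, the long edge of an effective simplex of positive
dimension is nondegenerate. -/
lemma longedge_nondeg (X : SSet) (hX : Tight X) {r : ℕ} (hr : 0 < r)
    (σ : X _⦋r⦌) (hσ : Effective X σ) :
    X.map (longEdgeMap r).op σ ∉ Set.range (X.σ (0 : Fin 1)) := by
  rintro ⟨x, hx⟩
  obtain ⟨N, hN⟩ := hX.2.2 (X.σ (0 : Fin 1) x)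
  obtain ⟨m, hk, hm, τ, hτ, htl⟩ := grow_all X hX hr σ hσ x hx.symm (N+1)
  exact absurd (hN m τ hτ htl) (by omega)

/-- The free map `[d] → [n]` onto the segment starting at `p`. -/
def freeSeg (n p d : ℕ) (h : p + d ≤ n) : (⦋d⦌ : SimplexCategory) ⟶ ⦋n⦌ :=
  SimplexCategory.mkHom ⟨fun t => ⟨p + t.1, by have := t.2; omega⟩, fun a b hab => by
    simp only [Fin.mk_le_mk]
    exact Nat.add_le_add_left hab p⟩

/-- In a tight decomposition space, every 1-dimensional face of an effective simplex is
nondegenerate. -/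
lemma inj_edge (X : SSet) (hX : Tight X) {n : ℕ} (σ : X _⦋n⦌) (hσ : Effective X σ)
    (e : SimplexCategory.mk 1 ⟶ SimplexCategory.mk n)
    (he : Function.Injective e.toOrderHom) :
    X.map e.op σ ∉ Set.range (X.σ (0 : Fin 1)) := by
  obtain ⟨P, hP⟩ : ∃ v : Fin (n+1), e.toOrderHom ⟨0, by show (0:ℕ) < 1 + 1; omega⟩ = v := ⟨_, rfl⟩
  obtain ⟨Q, hQ⟩ : ∃ v : Fin (n+1), e.toOrderHom ⟨1, by show (1:ℕ) < 1 + 1; omega⟩ = v := ⟨_, rfl⟩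
  have hmono : P.1 ≤ Q.1 := by
    rw [← hP, ← hQ]
    exact Fin.le_def.mp (e.toOrderHom.monotone (Fin.mk_le_mk.mpr (by omega)))
  have hne : P.1 ≠ Q.1 := by
    intro hh
    have h01 := he (show e.toOrderHom ⟨0, by show (0:ℕ) < 1 + 1; omega⟩
        = e.toOrderHom ⟨1, by show (1:ℕ) < 1 + 1; omega⟩ by
      rw [hP, hQ]; exact Fin.ext hh)
    have hv01 := congrArg Fin.val h01
    simp at hv01
  have hqn : Q.1 < n + 1 := Q.2
  have hd : 0 < Q.1 - P.1 := by omega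
  have hpd : P.1 + (Q.1 - P.1) ≤ n := by omega
  have hfac : e = longEdgeMap (Q.1 - P.1) ≫ freeSeg n P.1 (Q.1 - P.1) hpd := by
    apply homext'
    intro t
    rw [valc]
    have h2 : t.1 < 2 := t.2
    have h1 : (((freeSeg n P.1 (Q.1-P.1) hpd).toOrderHom ((longEdgeMap (Q.1-P.1)).toOrderHom t) : Fin (n+1)) : ℕ)
        = P.1 + t.1 * (Q.1 - P.1) := rfl
    rw [h1]
    have h3 : t.1 = 0 ∨ t.1 = 1 := by omega
    rcases h3 with h3 | h3
    · have ht : t = ⟨0, by show (0:ℕ) < 1 + 1; omega⟩ := Fin.ext h3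
      rw [ht, hP]
      show P.1 = P.1 + 0 * (Q.1 - P.1)
      omega
    · have ht : t = ⟨1, by show (1:ℕ) < 1 + 1; omega⟩ := Fin.ext h3
      rw [ht, hQ]
      show Q.1 = P.1 + 1 * (Q.1 - P.1)
      omega
  rw [hfac, mapc']
  have hσ' : Effective X (X.map (freeSeg n P.1 (Q.1-P.1) hpd).op σ) := by
    intro j
    have hj2 : j.1 < Q.1 - P.1 := j.2
    have hc : principalEdge (Q.1-P.1) j ≫ freeSeg n P.1 (Q.1-P.1) hpd
        = principalEdge n ⟨P.1 + j.1, by omega⟩ := by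
      apply homext'
      intro t
      rw [valc]
      show P.1 + (j.1 + t.1) = (P.1 + j.1) + t.1
      omega
    rw [← mapc', hc]
    exact hσ ⟨P.1 + j.1, by omega⟩
  exact longedge_nondeg X hX hd _ hσ'

/-- In a tight decomposition space, every face of an effective simplex is effective. -/
lemma face_eff (X : SSet) (hX : Tight X) {n : ℕ} (i : Fin (n+2)) (σ : X _⦋n+1⦌)
    (hσ : Effective X σ) : Effective X (X.δ i σ) := by
  intro j
  show X.map (principalEdge n j).op (X.map (SimplexCategory.δ i).op σ) ∉ _
  rw [← mapc']
  have hv : ∀ t : Fin 2, (((principalEdge n j ≫ SimplexCategory.δ i).toOrderHom t : Fin (n+2)) : ℕ)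
      = if j.1 + t.1 < i.1 then j.1 + t.1 else j.1 + t.1 + 1 := by
    intro t
    rw [valc]
    have := delta_val i ((principalEdge n j).toOrderHom t)
    rw [pe_val] at this
    exact this
  apply inj_edge X hX σ hσ
  intro x y hxy
  have h1 := hv x
  have h2 := hv y
  rw [hxy] at h1
  apply Fin.ext
  split at h1 <;> split at h2 <;> omega


end Aux

theorem statement16 (X : SSet) (hX : Tight X) :
    Split X ∧
    (∀ (n : ℕ) (σ : X _⦋n + 1⦌), Effective X σ →
      X.map (longEdgeMap (n + 1)).op σ ∉ Set.range (X.σ (0 : Fin 1))) ∧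
    (∀ (n : ℕ) (σ : X _⦋n⦌), Effective X σ →
      ∀ e : SimplexCategory.mk 1 ⟶ SimplexCategory.mk n,
        Function.Injective e.toOrderHom → X.map e.op σ ∉ Set.range (X.σ (0 : Fin 1))) ∧
    (∀ (n : ℕ) (i : Fin (n + 2)) (σ : X _⦋n + 1⦌), Effective X σ → Effective X (X.δ i σ)) := by
  obtain ⟨hD, h0, hfin⟩ := hX
  have hX' : Tight X := ⟨hD, h0, hfin⟩
  refine ⟨⟨complete_of X hD h0, ?_⟩, ?_, ?_, ?_⟩
  · intro n i σ hnd hdg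
    have hσe : Effective X σ := by
      by_contra h
      exact hnd ((degen_iff_eff X hD σ).mpr h)
    exact (degen_iff_eff X hD (X.δ i σ)).mp hdg (face_eff X hX' i σ hσe)
  · intro n σ hσ
    exact longedge_nondeg X hX' (Nat.succ_pos n) σ hσ
  · intro n σ hσ e he
    exact inj_edge X hX' σ hσ e he
  · intro n i σ hσ
    exact face_eff X hX' i σ hσ
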